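/- For 0 < α < 1, the function f₂(x) = (x−1)((x+1)² + 1)^α + 2((x+1)² + 4)^α − (x−1)(x² + 1)^α − (x² + 9)^α is strictly increasing on [1, ∞). -/

import Mathlib

open Real

private lemma tangent_ineq {α u v : ℝ} (hα0 : 0 < α) (hα1 : α < 1) (hv : 0 < v) (hvu : v ≤ u) :
    α * u ^ (α - 1) * (u - v) ≤ u ^ α - v ^ α := by
  have hu : 0 < u := hv.trans_le hvu
  have hs : (-1 : ℝ) ≤ v / u - 1 := by
    have : 0 ≤ v / u := by positivity
    linarith
  have hber := rpow_one_add_le_one_add_mul_self hs hα0.le hα1.le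
  rw [show (1 : ℝ) + (v / u - 1) = v / u by ring, Real.div_rpow hv.le hu.le] at hber
  have hua : (0 : ℝ) < u ^ α := Real.rpow_pos_of_pos hu α
  rw [div_le_iff₀ hua] at hber
  have h3 : u ^ (α - 1) = u ^ α / u := by rw [Real.rpow_sub hu, Real.rpow_one]
  rw [h3]
  have h4 : (1 + α * (v / u - 1)) * u ^ α = u ^ α - α * (u ^ α / u) * (u - v) := by
    field_simp
    ring
  linarith [h4 ▸ hber]

theorem stmt_13 (α : ℝ) (hα0 : 0 < α) (hα1 : α < 1) :
    StrictMonoOn (fun x : ℝ =>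
      (x - 1) * ((x + 1) ^ 2 + 1) ^ α + 2 * ((x + 1) ^ 2 + 4) ^ α
        - (x - 1) * (x ^ 2 + 1) ^ α - (x ^ 2 + 9) ^ α) (Set.Ici 1) := by
  apply strictMonoOn_of_deriv_pos (convex_Ici 1)
  · apply Continuous.continuousOn
    have c1 : Continuous fun x : ℝ => ((x + 1) ^ 2 + 1) ^ α :=
      Continuous.rpow_const (by continuity) fun x => Or.inl (by positivity)
    have c2 : Continuous fun x : ℝ => ((x + 1) ^ 2 + 4) ^ α :=
      Continuous.rpow_const (by continuity) fun x => Or.inl (by positivity)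
    have c3 : Continuous fun x : ℝ => (x ^ 2 + 1) ^ α :=
      Continuous.rpow_const (by continuity) fun x => Or.inl (by positivity)
    have c4 : Continuous fun x : ℝ => (x ^ 2 + 9) ^ α :=
      Continuous.rpow_const (by continuity) fun x => Or.inl (by positivity)
    exact ((((continuous_id.sub continuous_const).mul c1).add
      (continuous_const.mul c2)).sub ((continuous_id.sub continuous_const).mul c3)).sub c4
  · intro x hx
    rw [interior_Ici] at hx
    have hx1 : (1 : ℝ) < x := hx
    -- derivatives of the inner polynomials
    have hu : HasDerivAt (fun x : ℝ => (x + 1) ^ 2 + 1) (2 * (x + 1)) x := by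
      have h := (((hasDerivAt_id x).add_const 1).pow 2).add_const (1 : ℝ)
      exact h.congr_deriv (by simp)
    have hw : HasDerivAt (fun x : ℝ => (x + 1) ^ 2 + 4) (2 * (x + 1)) x := by
      have h := (((hasDerivAt_id x).add_const 1).pow 2).add_const (4 : ℝ)
      exact h.congr_deriv (by simp)
    have hv : HasDerivAt (fun x : ℝ => x ^ 2 + 1) (2 * x) x := by
      have h := ((hasDerivAt_id x).pow 2).add_const (1 : ℝ)
      exact h.congr_deriv (by simp)
    have hz : HasDerivAt (fun x : ℝ => x ^ 2 + 9) (2 * x) x := by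
      have h := ((hasDerivAt_id x).pow 2).add_const (9 : ℝ)
      exact h.congr_deriv (by simp)
    have hU : HasDerivAt (fun x : ℝ => ((x + 1) ^ 2 + 1) ^ α)
        (2 * (x + 1) * α * ((x + 1) ^ 2 + 1) ^ (α - 1)) x :=
      hu.rpow_const (Or.inl (by positivity))
    have hW : HasDerivAt (fun x : ℝ => ((x + 1) ^ 2 + 4) ^ α)
        (2 * (x + 1) * α * ((x + 1) ^ 2 + 4) ^ (α - 1)) x :=
      hw.rpow_const (Or.inl (by positivity))
    have hV : HasDerivAt (fun x : ℝ => (x ^ 2 + 1) ^ α)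
        (2 * x * α * (x ^ 2 + 1) ^ (α - 1)) x :=
      hv.rpow_const (Or.inl (by positivity))
    have hZ : HasDerivAt (fun x : ℝ => (x ^ 2 + 9) ^ α)
        (2 * x * α * (x ^ 2 + 9) ^ (α - 1)) x :=
      hz.rpow_const (Or.inl (by positivity))
    have hid : HasDerivAt (fun x : ℝ => x - 1) 1 x := (hasDerivAt_id x).sub_const 1
    have hF : HasDerivAt (fun x : ℝ =>
        (x - 1) * ((x + 1) ^ 2 + 1) ^ α + 2 * ((x + 1) ^ 2 + 4) ^ α
          - (x - 1) * (x ^ 2 + 1) ^ α - (x ^ 2 + 9) ^ α)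
        ((1 * (((x + 1) ^ 2 + 1) ^ α)
            + (x - 1) * (2 * (x + 1) * α * ((x + 1) ^ 2 + 1) ^ (α - 1))
          + 2 * (2 * (x + 1) * α * ((x + 1) ^ 2 + 4) ^ (α - 1)))
          - (1 * ((x ^ 2 + 1) ^ α) + (x - 1) * (2 * x * α * (x ^ 2 + 1) ^ (α - 1)))
          - 2 * x * α * (x ^ 2 + 9) ^ (α - 1)) x :=
      (((hid.mul hU).add (hW.const_mul 2)).sub (hid.mul hV)).sub hZ
    rw [hF.deriv]
    -- abbreviations
    set U := ((x + 1) ^ 2 + 1) ^ (α - 1) with hUdef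
    set V := (x ^ 2 + 1) ^ (α - 1) with hVdef
    set W := ((x + 1) ^ 2 + 4) ^ (α - 1) with hWdef
    have hUpos : 0 < U := Real.rpow_pos_of_pos (by positivity) _
    have hVpos : 0 < V := Real.rpow_pos_of_pos (by positivity) _
    have hWpos : 0 < W := Real.rpow_pos_of_pos (by positivity) _
    have hZpos : 0 < (x ^ 2 + 9) ^ (α - 1) := Real.rpow_pos_of_pos (by positivity) _
    -- tangent line bound : A - B ≥ α U (2x+1)
    have hA : α * U * (((x + 1) ^ 2 + 1) - (x ^ 2 + 1))
        ≤ ((x + 1) ^ 2 + 1) ^ α - (x ^ 2 + 1) ^ α :=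
      tangent_ineq hα0 hα1 (by positivity) (by nlinarith)
    -- bound on V : (x²+1) V ≤ ((x+1)²+1) U
    have hB' : (x ^ 2 + 1) * V ≤ ((x + 1) ^ 2 + 1) * U := by
      have e1 : (x ^ 2 + 1) * V = (x ^ 2 + 1) ^ α := by
        rw [hVdef, Real.rpow_sub (by positivity), Real.rpow_one]
        field_simp
      have e2 : ((x + 1) ^ 2 + 1) * U = ((x + 1) ^ 2 + 1) ^ α := by
        rw [hUdef, Real.rpow_sub (by positivity), Real.rpow_one]
        field_simp
      rw [e1, e2]
      exact Real.rpow_le_rpow (by positivity) (by nlinarith) hα0.le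
    -- bound on Z : Z ≤ 2 W
    have h1 : (x ^ 2 + 9) ^ (α - 1) ≤ 2 * W := by
      have hwz : ((x + 1) ^ 2 + 4) / 2 ≤ x ^ 2 + 9 := by nlinarith
      have h2 := Real.rpow_le_rpow_of_nonpos (by positivity) hwz (by linarith : α - 1 ≤ 0)
      have h3 : (((x + 1) ^ 2 + 4) / 2) ^ (α - 1)
          = ((x + 1) ^ 2 + 4) ^ (α - 1) / 2 ^ (α - 1) :=
        Real.div_rpow (by positivity) (by norm_num) _
      have h4 : (1 : ℝ) / 2 ≤ 2 ^ (α - 1) := by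
        have h5 : (2 : ℝ) ^ (-1 : ℝ) ≤ 2 ^ (α - 1) :=
          Real.rpow_le_rpow_of_exponent_le one_le_two (by linarith)
        rw [Real.rpow_neg_one] at h5
        linarith
      have h6 : ((x + 1) ^ 2 + 4) ^ (α - 1) / 2 ^ (α - 1)
          ≤ ((x + 1) ^ 2 + 4) ^ (α - 1) / (1 / 2) :=
        div_le_div_of_nonneg_left hWpos.le (by norm_num) h4
      calc (x ^ 2 + 9) ^ (α - 1) ≤ (((x + 1) ^ 2 + 4) / 2) ^ (α - 1) := h2
        _ = ((x + 1) ^ 2 + 4) ^ (α - 1) / 2 ^ (α - 1) := h3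
        _ ≤ ((x + 1) ^ 2 + 4) ^ (α - 1) / (1 / 2) := h6
        _ = 2 * W := by rw [hWdef]; ring
    -- key V bound, cleared of denominators
    have hG : 2 * α * x * (x - 1) * V ≤ α * (2 * x ^ 2 + 2 * x - 1) * U := by
      rw [← mul_le_mul_iff_right₀ (show (0 : ℝ) < x ^ 2 + 1 by positivity)]
      nlinarith [mul_le_mul_of_nonneg_left hB' (mul_nonneg (mul_nonneg (mul_nonneg (by norm_num) hα0.le) (by linarith)) (by linarith) : (0 : ℝ) ≤ 2 * α * x * (x - 1)),
        mul_nonneg (mul_nonneg hα0.le hUpos.le) (show (0 : ℝ) ≤ x ^ 2 + 6 * x - 1 by nlinarith)]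
    have hH : 2 * x * α * (x ^ 2 + 9) ^ (α - 1) ≤ 4 * x * α * W := by
      nlinarith [mul_le_mul_of_nonneg_left h1 (mul_nonneg (mul_nonneg (by norm_num) (by linarith)) hα0.le : (0 : ℝ) ≤ 2 * x * α)]
    have hWα : 0 < 4 * α * W := by positivity
    nlinarith [hA, hG, hH, hWα, mul_pos hα0 hUpos]
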